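/- Let P₁(Y) = λ₁₀Y^{p₁} + λ₂₀ and P₂(Y) = λ̃₁₀Y^{p₂} + λ̃₂₀ be complex polynomials with all four coefficients nonzero, and Q₁(Y) = (μ₁₀Y + μ₂₀)^{q₁}, Q₂(Y) = (μ̃₁₀Y + μ̃₂₀)^{q₂} with μ₁₀, μ₂₀, μ̃₁₀, μ̃₂₀ nonzero, where p₁ < p₂, q₂ < q₁, p₁ + q₁ = p₂ + q₂. If P₁(Y)Q₁(Y) = −P₂(Y)Q₂(Y) identically, then q₁ = q₂ + 1 and p₂ = p₁ + 1. -/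

import Mathlib

open Polynomial in
theorem stmt_16 (p₁ p₂ q₁ q₂ : ℕ) (hp : p₁ < p₂) (hq : q₂ < q₁)
    (hpq : p₁ + q₁ = p₂ + q₂)
    (l₁₀ l₂₀ lt₁₀ lt₂₀ m₁₀ m₂₀ mt₁₀ mt₂₀ : ℂ)
    (hl₁₀ : l₁₀ ≠ 0) (hl₂₀ : l₂₀ ≠ 0) (hlt₁₀ : lt₁₀ ≠ 0) (hlt₂₀ : lt₂₀ ≠ 0)
    (hm₁₀ : m₁₀ ≠ 0) (hm₂₀ : m₂₀ ≠ 0) (hmt₁₀ : mt₁₀ ≠ 0) (hmt₂₀ : mt₂₀ ≠ 0)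
    (hid : (C l₁₀ * X ^ p₁ + C l₂₀) * (C m₁₀ * X + C m₂₀) ^ q₁ =
      -((C lt₁₀ * X ^ p₂ + C lt₂₀) * (C mt₁₀ * X + C mt₂₀) ^ q₂)) :
    q₁ = q₂ + 1 ∧ p₂ = p₁ + 1 := by
  -- It suffices to show q₁ ≤ q₂ + 1.
  suffices h : q₁ ≤ q₂ + 1 by omega
  set r : ℂ := -m₂₀ / m₁₀ with hrdef
  set rt : ℂ := -mt₂₀ / mt₁₀ with hrtdef
  have hP₂ : (C lt₁₀ * X ^ p₂ + C lt₂₀ : ℂ[X]) ≠ 0 := by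
    intro h
    have := congrArg (fun p => Polynomial.coeff p p₂) h
    have hp2 : p₂ ≠ 0 := by omega
    simp [coeff_C, hp2, hlt₁₀] at this
  have hlin : (C mt₁₀ * X + C mt₂₀ : ℂ[X]) ≠ 0 := by
    intro h
    have := congrArg (fun p => Polynomial.coeff p 1) h
    simp [coeff_C, hmt₁₀] at this
  have hRHS : (-((C lt₁₀ * X ^ p₂ + C lt₂₀) * (C mt₁₀ * X + C mt₂₀) ^ q₂) : ℂ[X]) ≠ 0 := by
    simp only [neg_ne_zero]
    exact mul_ne_zero hP₂ (pow_ne_zero _ hlin)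
  have hLHS : ((C l₁₀ * X ^ p₁ + C l₂₀) * (C m₁₀ * X + C m₂₀) ^ q₁ : ℂ[X]) ≠ 0 := by
    rw [hid]; exact hRHS
  -- rewrite the linear factors
  have hfac : (C m₁₀ * X + C m₂₀ : ℂ[X]) = C m₁₀ * (X - C r) := by
    have : m₁₀ * r = -m₂₀ := by rw [hrdef]; field_simp
    rw [mul_sub, ← C_mul, this, map_neg, sub_neg_eq_add]
  have hfact : (C mt₁₀ * X + C mt₂₀ : ℂ[X]) = C mt₁₀ * (X - C rt) := by
    have : mt₁₀ * rt = -mt₂₀ := by rw [hrtdef]; field_simp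
    rw [mul_sub, ← C_mul, this, map_neg, sub_neg_eq_add]
  -- lower bound: q₁ ≤ rootMultiplicity r LHS
  have hlow : q₁ ≤ rootMultiplicity r
      ((C l₁₀ * X ^ p₁ + C l₂₀) * (C m₁₀ * X + C m₂₀) ^ q₁) := by
    rw [le_rootMultiplicity_iff hLHS]
    rw [hfac, mul_pow]
    exact Dvd.dvd.mul_left (dvd_mul_left _ _) _
  -- upper bound on rootMultiplicity of RHS
  have hmulP₂ : rootMultiplicity r (C lt₁₀ * X ^ p₂ + C lt₂₀) ≤ 1 := by
    by_contra hcon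
    push_neg at hcon
    rw [one_lt_rootMultiplicity_iff_isRoot hP₂] at hcon
    obtain ⟨h0, h1⟩ := hcon
    have hp₂pos : 0 < p₂ := lt_of_le_of_lt (Nat.zero_le _) hp
    have hd : derivative (C lt₁₀ * X ^ p₂ + C lt₂₀ : ℂ[X]) =
        C (lt₁₀ * p₂) * X ^ (p₂ - 1) := by
      rw [derivative_add, derivative_C_mul, derivative_X_pow, derivative_C, add_zero,
        C_mul, mul_assoc]
    rw [hd] at h1
    simp only [IsRoot, eval_mul, eval_C, eval_pow, eval_X] at h1
    have hnz : lt₁₀ * (p₂ : ℂ) ≠ 0 :=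
      mul_ne_zero hlt₁₀ (Nat.cast_ne_zero.mpr hp₂pos.ne')
    have h2 : r ^ (p₂ - 1) = 0 := by
      rcases mul_eq_zero.mp h1 with h | h
      · exact absurd h hnz
      · exact h
    have hr0 : r = 0 := by
      by_contra hr
      exact (pow_ne_zero _ hr) h2
    rw [hr0] at h0
    simp [IsRoot, zero_pow hp₂pos.ne', hlt₂₀] at h0
  have hmulQ₂ : rootMultiplicity r ((C mt₁₀ * X + C mt₂₀) ^ q₂) ≤ q₂ := by
    rw [hfact, mul_pow, ← C_pow]
    rcases Nat.eq_zero_or_pos q₂ with h | h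
    · simp [h]
    · rw [rootMultiplicity_mul (by simp [pow_ne_zero, hmt₁₀, X_sub_C_ne_zero]),
        rootMultiplicity_C]
      classical
      by_cases hrr : r = rt
      · rw [hrr, rootMultiplicity_X_sub_C_pow]; omega
      · rw [rootMultiplicity_eq_zero (by simp [IsRoot, sub_eq_zero, hrr])]; omega
  -- combine
  have key : rootMultiplicity r ((C l₁₀ * X ^ p₁ + C l₂₀) * (C m₁₀ * X + C m₂₀) ^ q₁)
      ≤ 1 + q₂ := by
    rw [hid]
    have hneg : (-((C lt₁₀ * X ^ p₂ + C lt₂₀) * (C mt₁₀ * X + C mt₂₀) ^ q₂) : ℂ[X]) =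
        C (-1) * ((C lt₁₀ * X ^ p₂ + C lt₂₀) * (C mt₁₀ * X + C mt₂₀) ^ q₂) := by
      simp
    rw [hneg, rootMultiplicity_mul (by rw [← hneg]; exact hRHS), rootMultiplicity_C,
      rootMultiplicity_mul (mul_ne_zero hP₂ (pow_ne_zero _ hlin))]
    omega
  omega
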